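/- Let X be a finite set of atoms and t an integer with 2 ≤ t ≤ |X|, and let E^p_{t,X} be the normal program consisting of all rules a_t ← not a_1, …, not a_{t−1}, where a_1, …, a_t are pairwise distinct atoms of X. Then the stable models of E^p_{t,X} are exactly the subsets of X of cardinality |X| − t + 1. -/
import Mathlib


open Classical

/-- A normal program rule `head ← pos, not neg`. -/
structure PRule where
  head : ℕ
  pos : Finset ℕ
  neg : Finset ℕ
deriving DecidableEq

/-- `At(P)`: the set of atoms occurring in a normal program. -/
def pAtoms (P : Finset PRule) : Finset ℕ :=
  P.sup (fun r => insert r.head (r.pos ∪ r.neg))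

/-- `N` is closed under the rules of the reduct `P^M`: whenever a rule of `P` has no negated
atom in `M` and its positive body is contained in `N`, its head belongs to `N`. -/
def closedUnder (P : Finset PRule) (M : Finset ℕ) (N : Set ℕ) : Prop :=
  ∀ r ∈ P, (∀ b ∈ r.neg, b ∉ M) → (↑r.pos : Set ℕ) ⊆ N → r.head ∈ N

/-- `M` is a stable model of `P`: `M` equals the least set of atoms closed under the rules of
the reduct `P^M`. -/
def isStable (P : Finset PRule) (M : Finset ℕ) : Prop :=
  closedUnder P M ↑M ∧ ∀ N : Set ℕ, closedUnder P M N → ↑M ⊆ N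

/-- `E^p_{t,X}`: the normal program of all rules `a_t ← not a_1, …, not a_{t−1}` with
`a_1, …, a_t` pairwise distinct atoms of `X`. -/
def EpProg (t : ℕ) (X : Finset ℕ) : Finset PRule :=
  X.biUnion (fun a => ((X.erase a).powersetCard (t - 1)).image (fun s => ⟨a, ∅, s⟩))

lemma mem_EpProg {t : ℕ} {X : Finset ℕ} {r : PRule} :
    r ∈ EpProg t X ↔ r.head ∈ X ∧ r.pos = ∅ ∧ r.neg ⊆ X.erase r.head ∧ r.neg.card = t - 1 := by
  simp only [EpProg, Finset.mem_biUnion, Finset.mem_image, Finset.mem_powersetCard]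
  constructor
  · rintro ⟨a, ha, s, ⟨hs, hc⟩, rfl⟩
    exact ⟨ha, rfl, hs, hc⟩
  · rintro ⟨h1, h2, h3, h4⟩
    exact ⟨r.head, h1, r.neg, ⟨h3, h4⟩, by cases r; simp_all⟩

lemma closed_iff {t : ℕ} {X M : Finset ℕ} {N : Set ℕ} :
    closedUnder (EpProg t X) M N ↔
      ∀ a ∈ X, t - 1 ≤ ((X.erase a) \ M).card → a ∈ N := by
  constructor
  · intro h a ha hcard
    obtain ⟨s, hs, hsc⟩ := Finset.exists_subset_card_eq hcard
    refine h ⟨a, ∅, s⟩ ?_ ?_ ?_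
    · exact mem_EpProg.mpr ⟨ha, rfl, fun b hb => (Finset.mem_sdiff.mp (hs hb)).1, hsc⟩
    · intro b hb; exact (Finset.mem_sdiff.mp (hs hb)).2
    · simp
  · intro h r hr hneg _
    obtain ⟨h1, h2, h3, h4⟩ := mem_EpProg.mp hr
    apply h r.head h1
    rw [← h4]
    apply Finset.card_le_card
    intro b hb
    exact Finset.mem_sdiff.mpr ⟨h3 hb, hneg b hb⟩

lemma stable_iff {t : ℕ} {X M : Finset ℕ} :
    isStable (EpProg t X) M ↔ M = X.filter (fun a => t - 1 ≤ ((X.erase a) \ M).card) := by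
  constructor
  · rintro ⟨h1, h2⟩
    have hcl : closedUnder (EpProg t X) M
        ↑(X.filter fun a => t - 1 ≤ ((X.erase a) \ M).card) := by
      rw [closed_iff]; intro a ha hc; simp only [Finset.coe_filter, Set.mem_setOf_eq]
      exact ⟨ha, hc⟩
    have hsub := h2 _ hcl
    apply Finset.Subset.antisymm
    · intro a ha; exact_mod_cast hsub ha
    · intro a ha
      rw [Finset.mem_filter] at ha
      exact closed_iff.mp h1 a ha.1 ha.2
  · intro hM
    constructor
    · rw [closed_iff]
      intro a ha hc
      have : a ∈ M := by rw [hM, Finset.mem_filter]; exact ⟨ha, hc⟩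
      exact_mod_cast this
    · intro N hN a ha
      have ha' : a ∈ M := ha
      rw [hM, Finset.mem_filter] at ha'
      exact closed_iff.mp hN a ha'.1 ha'.2

/-- For `2 ≤ t ≤ |X|`, the stable models of `E^p_{t,X}` are exactly the subsets of `X` of
cardinality `|X| − t + 1`. -/
theorem EpProg_stable_models (X : Finset ℕ) (t : ℕ) (ht : 2 ≤ t) (htX : t ≤ X.card) :
    ∀ M : Finset ℕ, isStable (EpProg t X) M ↔ (M ⊆ X ∧ M.card = X.card - t + 1) := by
  intro M
  rw [stable_iff]
  have hin : ∀ a ∈ M, M ⊆ X → ((X.erase a) \ M).card = X.card - M.card := by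
    intro a ha hMX
    have : (X.erase a) \ M = X \ M := by
      ext x
      simp only [Finset.mem_sdiff, Finset.mem_erase]
      constructor
      · rintro ⟨⟨_, hx⟩, hxm⟩; exact ⟨hx, hxm⟩
      · rintro ⟨hx, hxm⟩; exact ⟨⟨fun h => hxm (h ▸ ha), hx⟩, hxm⟩
    rw [this, Finset.card_sdiff_of_subset hMX]
  have hout : ∀ a ∈ X, a ∉ M → M ⊆ X → ((X.erase a) \ M).card = X.card - M.card - 1 := by
    intro a haX haM hMX
    have : (X.erase a) \ M = (X \ M).erase a := by
      ext x
      simp only [Finset.mem_sdiff, Finset.mem_erase]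
      tauto
    rw [this, Finset.card_erase_of_mem (Finset.mem_sdiff.mpr ⟨haX, haM⟩),
      Finset.card_sdiff_of_subset hMX]
  constructor
  · intro hM
    have hMX : M ⊆ X := by rw [hM]; exact Finset.filter_subset _ _
    refine ⟨hMX, ?_⟩
    have hmn : M.card ≤ X.card := Finset.card_le_card hMX
    -- X is nonempty
    obtain ⟨a0, ha0⟩ : X.Nonempty := Finset.card_pos.mp (by omega)
    -- M is nonempty
    have hMne : M.Nonempty := by
      rcases Finset.eq_empty_or_nonempty M with h | h
      · exfalso
        have : a0 ∉ M := by rw [h]; exact Finset.notMem_empty a0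
        have hbad : ¬ (t - 1 ≤ ((X.erase a0) \ M).card) := by
          intro hc
          have : a0 ∈ M := by rw [hM, Finset.mem_filter]; exact ⟨ha0, hc⟩
          exact ‹a0 ∉ M› this
        rw [hout a0 ha0 this hMX] at hbad
        have : M.card = 0 := by rw [h]; rfl
        omega
      · exact h
    obtain ⟨a, haM⟩ := hMne
    have hconda : t - 1 ≤ ((X.erase a) \ M).card := by
      have := hM ▸ haM
      rw [Finset.mem_filter] at this
      exact this.2
    rw [hin a haM hMX] at hconda
    -- M ≠ X
    have hMneX : ∃ b ∈ X, b ∉ M := by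
      by_contra h
      push_neg at h
      have : X.card ≤ M.card := Finset.card_le_card h
      omega
    obtain ⟨b, hbX, hbM⟩ := hMneX
    have hcondb : ¬ (t - 1 ≤ ((X.erase b) \ M).card) := by
      intro hc
      exact hbM (by rw [hM, Finset.mem_filter]; exact ⟨hbX, hc⟩)
    rw [hout b hbX hbM hMX] at hcondb
    omega
  · rintro ⟨hMX, hcard⟩
    have hmn : M.card ≤ X.card := Finset.card_le_card hMX
    ext a
    rw [Finset.mem_filter]
    constructor
    · intro haM
      refine ⟨hMX haM, ?_⟩
      rw [hin a haM hMX]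
      omega
    · rintro ⟨haX, hc⟩
      by_contra haM
      rw [hout a haX haM hMX] at hc
      omega
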